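/- Let n ≥ 5 and let λ = (λ_1 ≥ … ≥ λ_n) be either a nonzero integer partition of length n or a half-partition of length n (all entries in ℕ + 1/2). Then ∑_{i=1}^n (λ_i² + (2n−2i)·λ_i) ≥ 2n−1, with equality if and only if λ = (1,0,…,0). In particular, the half-partition (1/2,…,1/2) gives the value n(2n−1)/4, which is strictly larger than 2n−1 for n ≥ 5. -/

import Mathlib

lemma gauss_real (n : ℕ) : ∑ i : Fin n, ((i : ℕ) : ℝ) = n * (n - 1) / 2 := by
  induction n with
  | zero => simp
  | succ m ih =>
    rw [Fin.sum_univ_castSucc]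
    simp only [Fin.coe_castSucc, Fin.val_last, ih]
    push_cast
    ring


/-- For `n ≥ 5` and `λ` either a nonzero integer partition of length `n` or a half-partition
of length `n`, one has `∑_{i=1}^n (λ_i² + (2n-2i)·λ_i) ≥ 2n-1`, with equality iff
`λ = (1,0,…,0)`. Moreover the half-partition `(1/2,…,1/2)` gives the value `n(2n-1)/4`,
which is strictly larger than `2n-1` for `n ≥ 5`. -/
theorem statement3 (n : ℕ) (hn : 5 ≤ n) (lam : Fin n → ℝ) (hanti : Antitone lam)
    (hlam : ((∀ i, ∃ m : ℕ, lam i = m) ∧ lam ≠ 0) ∨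
      (∀ i, ∃ m : ℕ, lam i = (m : ℝ) + 1 / 2)) :
    (2 * (n : ℝ) - 1 ≤
      ∑ i : Fin n, (lam i ^ 2 + (2 * (n : ℝ) - 2 * (((i : ℕ) : ℝ) + 1)) * lam i)) ∧
    ((∑ i : Fin n, (lam i ^ 2 + (2 * (n : ℝ) - 2 * (((i : ℕ) : ℝ) + 1)) * lam i) =
        2 * (n : ℝ) - 1) ↔
      lam = fun i : Fin n => if (i : ℕ) = 0 then 1 else 0) ∧
    (∑ i : Fin n, ((1 / 2 : ℝ) ^ 2 + (2 * (n : ℝ) - 2 * (((i : ℕ) : ℝ) + 1)) * (1 / 2)) =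
      (n : ℝ) * (2 * (n : ℝ) - 1) / 4) ∧
    2 * (n : ℝ) - 1 < (n : ℝ) * (2 * (n : ℝ) - 1) / 4 := by
  have hn' : (5 : ℝ) ≤ n := by exact_mod_cast hn
  have part3 : ∑ i : Fin n, ((1 / 2 : ℝ) ^ 2 + (2 * (n : ℝ) - 2 * (((i : ℕ) : ℝ) + 1)) * (1 / 2)) =
      (n : ℝ) * (2 * (n : ℝ) - 1) / 4 := by
    have h1 : ∀ i : Fin n, ((1 / 2 : ℝ) ^ 2 + (2 * (n : ℝ) - 2 * (((i : ℕ) : ℝ) + 1)) * (1 / 2)) =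
        ((n : ℝ) - 3 / 4) - ((i : ℕ) : ℝ) := fun i => by ring
    rw [Finset.sum_congr rfl fun i _ => h1 i, Finset.sum_sub_distrib, Finset.sum_const,
      Finset.card_univ, Fintype.card_fin, gauss_real]
    ring
  have part4 : 2 * (n : ℝ) - 1 < (n : ℝ) * (2 * (n : ℝ) - 1) / 4 := by nlinarith
  have hc : ∀ i : Fin n, (0 : ℝ) ≤ 2 * (n : ℝ) - 2 * (((i : ℕ) : ℝ) + 1) := by
    intro i
    have h1 : (i : ℕ) + 1 ≤ n := i.isLt
    have h2 : ((i : ℕ) : ℝ) + 1 ≤ n := by exact_mod_cast h1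
    linarith
  rcases hlam with ⟨hint, hne⟩ | hhalf
  · -- integer case
    have hnn : ∀ i, (0 : ℝ) ≤ lam i := by
      intro i; obtain ⟨m, hm⟩ := hint i; rw [hm]; exact Nat.cast_nonneg m
    set i0 : Fin n := ⟨0, by omega⟩ with hi0
    have h0 : (1 : ℝ) ≤ lam i0 := by
      obtain ⟨j, hj⟩ := Function.ne_iff.mp hne
      obtain ⟨m, hm⟩ := hint j
      have hm1 : 1 ≤ m := by
        rcases Nat.eq_zero_or_pos m with h | h
        · exfalso; apply hj; rw [hm, h]; simp
        · exact h
      have hj1 : (1 : ℝ) ≤ lam j := by rw [hm]; exact_mod_cast hm1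
      have hle : i0 ≤ j := Fin.mk_le_of_le_val (Nat.zero_le _)
      have := hanti hle
      linarith
    have hterm : ∀ i : Fin n,
        (0 : ℝ) ≤ lam i ^ 2 + (2 * (n : ℝ) - 2 * (((i : ℕ) : ℝ) + 1)) * lam i := by
      intro i
      have := hc i; have := hnn i
      nlinarith [mul_nonneg (hc i) (hnn i), sq_nonneg (lam i)]
    have hsplit : ∑ i : Fin n, (lam i ^ 2 + (2 * (n : ℝ) - 2 * (((i : ℕ) : ℝ) + 1)) * lam i) =
        (lam i0 ^ 2 + (2 * (n : ℝ) - 2 * (((i0 : ℕ) : ℝ) + 1)) * lam i0) +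
        ∑ i ∈ Finset.univ.erase i0,
          (lam i ^ 2 + (2 * (n : ℝ) - 2 * (((i : ℕ) : ℝ) + 1)) * lam i) :=
      (Finset.add_sum_erase _ _ (Finset.mem_univ i0)).symm
    have hi0v : ((i0 : ℕ) : ℝ) = 0 := by simp [hi0]
    have hrest : (0 : ℝ) ≤ ∑ i ∈ Finset.univ.erase i0,
        (lam i ^ 2 + (2 * (n : ℝ) - 2 * (((i : ℕ) : ℝ) + 1)) * lam i) :=
      Finset.sum_nonneg fun i _ => hterm i
    have hterm0 : 2 * (n : ℝ) - 1 ≤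
        lam i0 ^ 2 + (2 * (n : ℝ) - 2 * (((i0 : ℕ) : ℝ) + 1)) * lam i0 := by
      rw [hi0v]
      nlinarith [mul_nonneg (show (0:ℝ) ≤ lam i0 - 1 by linarith)
        (show (0:ℝ) ≤ lam i0 + 2 * (n:ℝ) - 1 by linarith)]
    refine ⟨by rw [hsplit]; linarith, ⟨?_, ?_⟩, part3, part4⟩
    · intro heq
      rw [hsplit] at heq
      have ht0 : lam i0 ^ 2 + (2 * (n : ℝ) - 2 * (((i0 : ℕ) : ℝ) + 1)) * lam i0
          = 2 * (n : ℝ) - 1 := by linarith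
      have hr0 : ∑ i ∈ Finset.univ.erase i0,
          (lam i ^ 2 + (2 * (n : ℝ) - 2 * (((i : ℕ) : ℝ) + 1)) * lam i) = 0 := by linarith
      have hzero : ∀ i ∈ Finset.univ.erase i0,
          lam i ^ 2 + (2 * (n : ℝ) - 2 * (((i : ℕ) : ℝ) + 1)) * lam i = 0 :=
        (Finset.sum_eq_zero_iff_of_nonneg fun i _ => hterm i).mp hr0
      have hlam0 : lam i0 = 1 := by
        rw [hi0v] at ht0
        have hle : lam i0 ≤ 1 := by nlinarith
        linarith
      funext i
      by_cases hi : (i : ℕ) = 0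
      · have : i = i0 := Fin.ext (by simp [hi0, hi])
        rw [this, hlam0]; simp [hi0]
      · have hii : i ∈ Finset.univ.erase i0 := by
          simp [Finset.mem_erase]
          intro h; apply hi; rw [h]
        have h1 := hzero i hii
        have h2 : lam i ≤ 0 := by nlinarith [mul_nonneg (hc i) (hnn i)]
        have : lam i = 0 := le_antisymm h2 (hnn i)
        rw [this]; simp [hi]
    · intro h
      rw [h] at hsplit ⊢
      rw [hsplit]
      have hz : ∀ i ∈ Finset.univ.erase i0,
          ((fun i : Fin n => if (i : ℕ) = 0 then (1:ℝ) else 0) i ^ 2 +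
            (2 * (n : ℝ) - 2 * (((i : ℕ) : ℝ) + 1)) *
              (fun i : Fin n => if (i : ℕ) = 0 then (1:ℝ) else 0) i) = 0 := by
        intro i hi
        have hne' : i ≠ i0 := (Finset.mem_erase.mp hi).1
        have : (i : ℕ) ≠ 0 := fun h => hne' (Fin.ext (by simp [hi0, h]))
        simp [this]
      rw [Finset.sum_eq_zero hz, hi0v]
      simp [hi0]
      ring
  · -- half case
    have hge : ∀ i, (1 / 2 : ℝ) ≤ lam i := by
      intro i; obtain ⟨m, hm⟩ := hhalf i
      have : (0 : ℝ) ≤ m := Nat.cast_nonneg m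
      rw [hm]; linarith
    have hS : (n : ℝ) * (2 * (n : ℝ) - 1) / 4 ≤
        ∑ i : Fin n, (lam i ^ 2 + (2 * (n : ℝ) - 2 * (((i : ℕ) : ℝ) + 1)) * lam i) := by
      rw [← part3]
      apply Finset.sum_le_sum
      intro i _
      nlinarith [hge i, hc i, mul_nonneg (hc i) (show (0:ℝ) ≤ lam i - 1/2 by linarith [hge i]),
        mul_nonneg (show (0:ℝ) ≤ lam i - 1/2 by linarith [hge i])
          (show (0:ℝ) ≤ lam i + 1/2 by linarith [hge i])]
    refine ⟨by linarith, ⟨?_, ?_⟩, part3, part4⟩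
    · intro heq; exfalso; linarith
    · intro h; exfalso
      obtain ⟨m, hm⟩ := hhalf ⟨1, by omega⟩
      rw [h] at hm
      simp at hm
      have : (0 : ℝ) ≤ m := Nat.cast_nonneg m
      linarith
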